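/- Let $v_0,\ldots,v_d\in\mathbb{R}^N$ be affinely independent ($d\ge 2$), and suppose $w$ in the affine hull satisfies $\langle v_i-w, v_j-w\rangle = c$ for all $i\ne j$, for some constant $c$. If $w$ lies in the relative interior of the simplex $[v_0,\ldots,v_d]$, then $c < 0$. -/

import Mathlib

open scoped RealInnerProductSpace
open Finset

/-- From membership in the intrinsic interior, extract an ambient open set whose
intersection with the affine span is contained in the set. -/
lemma exists_open_inter_span_subset {E : Type*} [NormedAddCommGroup E] [NormedSpace ℝ E]
    {s : Set E} {w : E} (hw : w ∈ intrinsicInterior ℝ s) :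
    ∃ U : Set E, IsOpen U ∧ w ∈ U ∧ U ∩ (affineSpan ℝ s : Set E) ⊆ s := by
  obtain ⟨y, hy, hyw⟩ := mem_intrinsicInterior.1 hw
  have h1 : ((↑) ⁻¹' s : Set <| affineSpan ℝ s) ∈ nhds y := mem_interior_iff_mem_nhds.1 hy
  rw [nhds_subtype_eq_comap, Filter.mem_comap] at h1
  obtain ⟨U, hU, hUs⟩ := h1
  obtain ⟨V, hVU, hVopen, hyV⟩ := mem_nhds_iff.1 hU
  refine ⟨V, hVopen, hyw ▸ hyV, ?_⟩
  rintro x ⟨hxV, hxspan⟩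
  exact hUs (show ((⟨x, hxspan⟩ : affineSpan ℝ s) : E) ∈ U from hVU hxV)

section Main
variable {N d : ℕ}

lemma vertex_not_relint (hd : 2 ≤ d) (v : Fin (d + 1) → EuclideanSpace ℝ (Fin N))
    (hv : AffineIndependent ℝ v) (k : Fin (d + 1))
    (hU : ∃ U : Set (EuclideanSpace ℝ (Fin N)), IsOpen U ∧ v k ∈ U ∧
      U ∩ (affineSpan ℝ (convexHull ℝ (Set.range v)) : Set _) ⊆ convexHull ℝ (Set.range v)) :
    False := by
  classical
  obtain ⟨U, hUo, hkU, hUsub⟩ := hU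
  set c₀ : ℝ := ((d : ℝ) + 1)⁻¹ with hc₀
  have hc₀pos : 0 < c₀ := by positivity
  set wt : ℝ → Fin (d + 1) → ℝ := fun t i => (if i = k then 1 + t else 0) - t * c₀ with hwt
  have sum_wt : ∀ t, ∑ i, wt t i = 1 := by
    intro t
    simp only [hwt, Finset.sum_sub_distrib, Finset.sum_ite_eq', Finset.mem_univ, if_true,
      Finset.sum_const, Finset.card_univ, Fintype.card_fin, nsmul_eq_mul]
    rw [hc₀]
    have h1 : ((d : ℝ) + 1) ≠ 0 := by positivity
    field_simp
    push_cast; ring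
  set f : ℝ → EuclideanSpace ℝ (Fin N) := fun t => ∑ i, wt t i • v i with hf
  have hfa : ∀ t, f t = Finset.univ.affineCombination ℝ v (wt t) :=
    fun t => (Finset.affineCombination_eq_linear_combination _ _ _ (sum_wt t)).symm
  have hcont : Continuous f := by
    apply continuous_finset_sum
    intro i _
    apply Continuous.smul (f := fun a => wt a i) (g := fun _ => v i) _ continuous_const
    by_cases h : i = k <;> simp [hwt, h] <;> fun_prop
  have hf0 : f 0 = v k := by
    simp [hf, hwt, ite_smul, Finset.sum_ite_eq']
  have hmem : f ⁻¹' U ∈ nhds (0 : ℝ) :=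
    hcont.continuousAt.preimage_mem_nhds (hf0 ▸ hUo.mem_nhds hkU)
  obtain ⟨ε, hε, hball⟩ := Metric.mem_nhds_iff.1 hmem
  set t : ℝ := ε / 2 with ht
  have htpos : 0 < t := by positivity
  have hfU : f t ∈ U := hball (by rw [Metric.mem_ball, Real.dist_eq, sub_zero, ht, abs_of_pos (by positivity : (0:ℝ) < ε/2)]; linarith)
  have hspan : f t ∈ (affineSpan ℝ (convexHull ℝ (Set.range v)) : Set _) := by
    rw [affineSpan_convexHull, hfa]
    exact affineCombination_mem_affineSpan (sum_wt t) v
  have hch : f t ∈ convexHull ℝ (Set.range v) := hUsub ⟨hfU, hspan⟩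
  rw [convexHull_range_eq_exists_affineCombination] at hch
  obtain ⟨s₂, b₂, hb₂0, hb₂1, hb₂⟩ := hch
  have hind := hv.indicator_eq_of_affineCombination_eq Finset.univ s₂ (wt t) b₂ (sum_wt t) hb₂1
    (by rw [← hfa]; exact hb₂.symm)
  obtain ⟨i₁, hi₁⟩ : ∃ i₁ : Fin (d + 1), i₁ ≠ k := by
    have h0 : ((0 : Fin (d + 1)) : ℕ) = 0 := rfl
    by_cases h : k = 0
    · exact ⟨⟨1, by omega⟩, by simp [h, Fin.ext_iff]⟩
    · exact ⟨0, fun h' => h h'.symm⟩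
  have := congrFun hind i₁
  rw [Finset.coe_univ, Set.indicator_univ] at this
  have hlhs : wt t i₁ = -(t * c₀) := by simp [hwt, hi₁]
  have hrhs : 0 ≤ Set.indicator (↑s₂) b₂ i₁ := Set.indicator_nonneg (fun j hj => hb₂0 j hj) i₁
  rw [this] at hlhs
  nlinarith [mul_pos htpos hc₀pos]

end Main


/-- If `w` lies in the relative interior of the simplex `[v₀,…,v_d]` and
`⟪v i - w, v j - w⟫ = c` for all `i ≠ j`, then `c < 0`. -/
theorem orthocenter_relint_c_neg (N d : ℕ) (hd : 2 ≤ d)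
    (v : Fin (d + 1) → EuclideanSpace ℝ (Fin N))
    (hv : AffineIndependent ℝ v)
    (w : EuclideanSpace ℝ (Fin N)) (c : ℝ)
    (hc : ∀ i j : Fin (d + 1), i ≠ j → ⟪v i - w, v j - w⟫ = c)
    (hw : w ∈ intrinsicInterior ℝ (convexHull ℝ (Set.range v))) :
    c < 0 := by
  classical
  have hwS : w ∈ convexHull ℝ (Set.range v) := intrinsicInterior_subset hw
  rw [convexHull_range_eq_exists_affineCombination] at hwS
  obtain ⟨s', b, hb0, hb1, hbw⟩ := hwS
  set a : Fin (d + 1) → ℝ := Set.indicator ↑s' b with ha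
  have ha0 : ∀ i, 0 ≤ a i := fun i => Set.indicator_nonneg (fun j hj => hb0 j hj) i
  have ha1 : ∑ i, a i = 1 := by
    rw [ha, ← hb1]
    exact Finset.sum_indicator_subset b (Finset.subset_univ s')
  have haw : ∑ i, a i • v i = w := by
    rw [← Finset.affineCombination_eq_linear_combination _ _ _ ha1, ha,
      ← Finset.affineCombination_indicator_subset b v (Finset.subset_univ s')]
    exact hbw
  have hS : ∑ i, a i • (v i - w) = 0 := by
    simp only [smul_sub, Finset.sum_sub_distrib, haw, ← Finset.sum_smul, ha1, one_smul,
      sub_self]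
  have key : ∑ i, ∑ j, (a i * a j) * ⟪v i - w, v j - w⟫ = 0 := by
    have h0 : ⟪∑ i, a i • (v i - w), ∑ j, a j • (v j - w)⟫ = 0 := by
      rw [hS]; simp
    rw [← h0, sum_inner]
    refine Finset.sum_congr rfl fun i _ => ?_
    rw [inner_sum]
    refine Finset.sum_congr rfl fun j _ => ?_
    rw [real_inner_smul_left, real_inner_smul_right]
    ring
  have hrow : ∀ i, ∑ j, (a i * a j) * ⟪v i - w, v j - w⟫
      = a i * a i * ⟪v i - w, v i - w⟫ + (∑ j ∈ Finset.univ.erase i, a i * a j) * c := by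
    intro i
    rw [← Finset.sum_erase_add _ _ (Finset.mem_univ i), add_comm, Finset.sum_mul]
    congr 1
    exact Finset.sum_congr rfl fun j hj =>
      by rw [hc i j (Finset.ne_of_mem_erase hj).symm]
  set Q : ℝ := ∑ i, a i * a i * ⟪v i - w, v i - w⟫ with hQ
  set T : ℝ := ∑ i, ∑ j ∈ Finset.univ.erase i, a i * a j with hT
  have key2 : Q + T * c = 0 := by
    rw [hQ, hT, Finset.sum_mul, ← Finset.sum_add_distrib, ← key]
    exact Finset.sum_congr rfl fun i _ => (hrow i).symm
  have hQ0 : 0 ≤ Q :=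
    Finset.sum_nonneg fun i _ => mul_nonneg (mul_nonneg (ha0 i) (ha0 i)) real_inner_self_nonneg
  by_cases hone : ∃ i j : Fin (d + 1), i ≠ j ∧ a i ≠ 0 ∧ a j ≠ 0
  · obtain ⟨i0, j0, hij, hi0, hj0⟩ := hone
    have hai0 : 0 < a i0 := lt_of_le_of_ne (ha0 i0) (Ne.symm hi0)
    have haj0 : 0 < a j0 := lt_of_le_of_ne (ha0 j0) (Ne.symm hj0)
    have hgnn : ∀ i, 0 ≤ ∑ j ∈ Finset.univ.erase i, a i * a j := fun i =>
      Finset.sum_nonneg fun j _ => mul_nonneg (ha0 i) (ha0 j)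
    have hTpos : 0 < T := by
      have h1 : a i0 * a j0 ≤ ∑ j ∈ Finset.univ.erase i0, a i0 * a j :=
        Finset.single_le_sum (fun j _ => mul_nonneg (ha0 i0) (ha0 j))
          (Finset.mem_erase.2 ⟨hij.symm, Finset.mem_univ j0⟩)
      have h2 : (∑ j ∈ Finset.univ.erase i0, a i0 * a j) ≤ T :=
        Finset.single_le_sum (fun i _ => hgnn i) (Finset.mem_univ i0)
      nlinarith [mul_pos hai0 haj0]
    have hQpos : 0 < Q := by
      have hne' : v i0 ≠ w ∨ v j0 ≠ w := by
        by_contra h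
        push_neg at h
        exact hij (hv.injective (h.1.trans h.2.symm))
      obtain ⟨i1, hai1, hvi1⟩ : ∃ i1, 0 < a i1 ∧ v i1 ≠ w := by
        rcases hne' with h | h
        · exact ⟨i0, hai0, h⟩
        · exact ⟨j0, haj0, h⟩
      have hip : 0 < ⟪v i1 - w, v i1 - w⟫ := by
        rw [real_inner_self_eq_norm_sq]
        exact pow_pos (norm_pos_iff.mpr (sub_ne_zero.2 hvi1)) 2
      have hterm : 0 < a i1 * a i1 * ⟪v i1 - w, v i1 - w⟫ :=
        mul_pos (mul_pos hai1 hai1) hip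
      have hle : a i1 * a i1 * ⟪v i1 - w, v i1 - w⟫ ≤ Q := by
        rw [hQ]
        exact Finset.single_le_sum
          (f := fun i => a i * a i * ⟪v i - w, v i - w⟫)
          (fun i _ => mul_nonneg (mul_nonneg (ha0 i) (ha0 i)) real_inner_self_nonneg)
          (Finset.mem_univ i1)
      linarith
    nlinarith
  · push_neg at hone
    obtain ⟨k, hk⟩ : ∃ k, a k ≠ 0 := by
      by_contra h
      push_neg at h
      rw [Finset.sum_congr rfl fun i _ => h i] at ha1
      simp at ha1
    have hzero : ∀ j, j ≠ k → a j = 0 := fun j hj =>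
      hone k j (Ne.symm hj) hk
    have hak : a k = 1 := by
      rw [← ha1, Finset.sum_eq_single k (fun j _ hj => hzero j hj) (by simp)]
    have hwk : w = v k := by
      rw [← haw, Finset.sum_eq_single k (fun j _ hj => by rw [hzero j hj, zero_smul])
        (by simp), hak, one_smul]
    exfalso
    obtain ⟨U, hUo, hwU, hUsub⟩ := exists_open_inter_span_subset hw
    exact vertex_not_relint hd v hv k ⟨U, hUo, hwk ▸ hwU, hUsub⟩
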